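/- Let λ₁ = λ₁(L(S)) be the smallest nonzero eigenvalue of the graph Laplacian Δ on L(S) (assumed connected). Then for every f ∈ C¹: ⟨Δf, f⟩_{L(S)} ≥ λ₁ ⟨f,f⟩_{C¹} − (λ₁/4) ⟨d₁*f, d₁*f⟩_{C⁰}. -/

import Mathlib

open Finset ContinuousLinearMap

def edgeSet {G : Type*} [Group G] [DecidableEq G] (S : Finset G) : Finset (G × G) :=
  (S ×ˢ S).filter fun p => p.1⁻¹ * p.2 ∈ S

def deg {G : Type*} [Group G] [DecidableEq G] (S : Finset G) (s : G) : ℕ :=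
  (S.filter fun s' => s⁻¹ * s' ∈ S).card

def IsAlmostRep {G : Type*} [Group G] {H : Type*} [NormedAddCommGroup H]
    [InnerProductSpace ℂ H] [CompleteSpace H]
    (S : Finset G) (ε : ℝ) (π : G → H →L[ℂ] H) : Prop :=
  (∀ s ∈ S, π s ∈ unitary (H →L[ℂ] H)) ∧
  (∀ s ∈ S, π s⁻¹ = star (π s)) ∧
  ∀ s₁ ∈ S, ∀ s₂ ∈ S, s₁ * s₂ ∈ S → ‖π (s₁ * s₂) - (π s₁).comp (π s₂)‖ ≤ ε

/-- `d₂ f ((s,s')) = f(s) − f(s') + π(s) f(s⁻¹s')`. -/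
def d2 {G : Type*} [Group G] {H : Type*} [NormedAddCommGroup H] [InnerProductSpace ℂ H]
    (π : G → H →L[ℂ] H) (f : G → H) (p : G × G) : H :=
  f p.1 - f p.2 + π p.1 (f (p.1⁻¹ * p.2))

/-- The graph `L(S)`: vertices in `S`, with `s ∼ s'` iff `s, s', s⁻¹s' ∈ S` (and `s ≠ s'`). -/
def lGraph {G : Type*} [Group G] (S : Finset G) : SimpleGraph G where
  Adj s s' := s ∈ S ∧ s' ∈ S ∧ s⁻¹ * s' ∈ S ∧ s'⁻¹ * s ∈ S ∧ s ≠ s'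
  symm := ⟨fun a b h => ⟨h.2.1, h.1, h.2.2.2.1, h.2.2.1, h.2.2.2.2.symm⟩⟩
  loopless := ⟨fun a h => h.2.2.2.2 rfl⟩

/-- `μ` is an eigenvalue of the discrete Laplacian
`Δf(s) = f(s) − (1/deg s) ∑_{s'∼s} f(s')` of the graph `L(S)`. -/
def IsLapEig {G : Type*} [Group G] [DecidableEq G] (S : Finset G) (μ : ℝ) : Prop :=
  ∃ g : G → ℝ, (∃ s ∈ S, g s ≠ 0) ∧ ∀ s ∈ S,
    g s - ((deg S s : ℝ))⁻¹ * ∑ s' ∈ S.filter (fun t => s⁻¹ * t ∈ S), g s' = μ * g s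

/-- `d₁* f = −2 ∑_{s∈S} f(s) n(s)/|T|`. -/
noncomputable def d1star {G : Type*} [Group G] [DecidableEq G]
    {H : Type*} [NormedAddCommGroup H] [InnerProductSpace ℂ H]
    (S : Finset G) (f : G → H) : H :=
  (-(2 / ((edgeSet S).card : ℂ))) • ∑ s ∈ S, (deg S s : ℂ) • f s

section ZukAux

variable {G : Type*} [Group G] [DecidableEq G]

noncomputable def zd (S : Finset G) (s : G) : ℝ := Real.sqrt (deg S s)

def za (S : Finset G) (s t : G) : ℝ := if s⁻¹ * t ∈ S then 1 else 0

noncomputable def zM (S : Finset G) : Matrix {x // x ∈ S} {x // x ∈ S} ℝ :=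
  fun s t => (if s = t then (1:ℝ) else 0) - za S ↑s ↑t / (zd S ↑s * zd S ↑t)

noncomputable def zT (S : Finset G) :
    EuclideanSpace ℝ {x // x ∈ S} →ₗ[ℝ] EuclideanSpace ℝ {x // x ∈ S} :=
  Matrix.toEuclideanLin (zM S)

variable {S : Finset G}

lemma zd_nonneg (s : G) : 0 ≤ zd S s := Real.sqrt_nonneg _

lemma zd_sq (s : G) : zd S s * zd S s = (deg S s : ℝ) :=
  Real.mul_self_sqrt (Nat.cast_nonneg _)

lemma zd_pos (hdeg : ∀ s ∈ S, 0 < deg S s) {s : G} (hs : s ∈ S) : 0 < zd S s :=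
  Real.sqrt_pos.2 (by exact_mod_cast hdeg s hs)

lemma za_symm (hsym : ∀ s ∈ S, s⁻¹ ∈ S) (s t : G) : za S s t = za S t s := by
  unfold za
  by_cases h : s⁻¹ * t ∈ S
  · have h2 : t⁻¹ * s ∈ S := by
      have := hsym _ h
      rwa [mul_inv_rev, inv_inv] at this
    rw [if_pos h, if_pos h2]
  · have h2 : t⁻¹ * s ∉ S := by
      intro hc
      have := hsym _ hc
      rw [mul_inv_rev, inv_inv] at this
      exact h this
    rw [if_neg h, if_neg h2]

lemma sum_za {s : G} (_hs : s ∈ S) : ∑ t : {x // x ∈ S}, za S s ↑t = (deg S s : ℝ) := by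
  rw [Finset.univ_eq_attach, Finset.sum_attach S (fun t => za S s t)]
  unfold za deg
  rw [Finset.sum_boole]

lemma zM_herm (hsym : ∀ s ∈ S, s⁻¹ ∈ S) : (zM S).IsHermitian := by
  unfold Matrix.IsHermitian
  ext s t
  simp only [Matrix.conjTranspose_apply, zM, star_trivial]
  rw [za_symm hsym, mul_comm]
  congr 1
  simp [eq_comm]

lemma zT_symm (hsym : ∀ s ∈ S, s⁻¹ ∈ S) : (zT S).IsSymmetric :=
  Matrix.isHermitian_iff_isSymmetric.mp (zM_herm hsym)

lemma zT_apply (x : EuclideanSpace ℝ {x // x ∈ S}) (s : {x // x ∈ S}) :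
    zT S x s = x s - ∑ t : {x // x ∈ S}, za S ↑s ↑t / (zd S ↑s * zd S ↑t) * x t := by
  have : zT S x s = ∑ t, zM S s t * x t := by
    rw [zT, Matrix.toEuclideanLin_apply]
    rfl
  rw [this]
  simp only [zM, sub_mul, ite_mul, one_mul, zero_mul]
  rw [Finset.sum_sub_distrib, Finset.sum_ite_eq]
  simp

end ZukAux

section New
variable {G : Type*} [Group G] [DecidableEq G] {S : Finset G}

lemma za_nonneg (s t : G) : 0 ≤ za S s t := by unfold za; split <;> norm_num

lemma zT_quad (hdeg : ∀ s ∈ S, 0 < deg S s) (hsym : ∀ s ∈ S, s⁻¹ ∈ S)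
    (x : EuclideanSpace ℝ {x // x ∈ S}) :
    ∑ s : {x // x ∈ S}, zT S x s * x s =
      (1/2) * ∑ s : {x // x ∈ S}, ∑ t : {x // x ∈ S},
        za S ↑s ↑t * (x s / zd S ↑s - x t / zd S ↑t)^2 := by
  have hexp : ∀ s t : {x // x ∈ S},
      za S ↑s ↑t * (x s / zd S ↑s - x t / zd S ↑t)^2 =
      za S ↑s ↑t * (x s / zd S ↑s)^2 + za S ↑s ↑t * (x t / zd S ↑t)^2
        - 2 * (za S ↑s ↑t * (x s / zd S ↑s) * (x t / zd S ↑t)) := by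
    intro s t; ring
  have h1 : ∀ s : {x // x ∈ S}, ∑ t : {x // x ∈ S}, za S ↑s ↑t * (x s / zd S ↑s)^2
      = x s * x s := by
    intro s
    rw [← Finset.sum_mul, sum_za s.2]
    have hd := (zd_pos hdeg s.2 : (0:ℝ) < zd S ↑s).ne'
    rw [← zd_sq (S := S) ↑s]
    field_simp
  have h2 : ∑ s : {x // x ∈ S}, ∑ t : {x // x ∈ S}, za S ↑s ↑t * (x t / zd S ↑t)^2
      = ∑ s : {x // x ∈ S}, x s * x s := by
    rw [Finset.sum_comm]
    refine Finset.sum_congr rfl fun t _ => ?_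
    calc ∑ s : {x // x ∈ S}, za S ↑s ↑t * (x t / zd S ↑t)^2
        = ∑ s : {x // x ∈ S}, za S ↑t ↑s * (x t / zd S ↑t)^2 := by
          refine Finset.sum_congr rfl fun s _ => by rw [za_symm hsym]
      _ = x t * x t := h1 t
  have hcross : ∀ s t : {x // x ∈ S},
      za S ↑s ↑t / (zd S ↑s * zd S ↑t) * x t * x s
        = za S ↑s ↑t * (x s / zd S ↑s) * (x t / zd S ↑t) := by
    intro s t
    simp only [div_eq_mul_inv, mul_inv]
    ring
  have hC : ∑ s : {x // x ∈ S}, (∑ t : {x // x ∈ S},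
      za S ↑s ↑t / (zd S ↑s * zd S ↑t) * x t) * x s
      = ∑ s : {x // x ∈ S}, ∑ t : {x // x ∈ S},
        za S ↑s ↑t * (x s / zd S ↑s) * (x t / zd S ↑t) := by
    refine Finset.sum_congr rfl fun s _ => ?_
    rw [Finset.sum_mul]
    exact Finset.sum_congr rfl fun t _ => hcross s t
  have h2' : ∑ s : {x // x ∈ S}, ∑ t : {x // x ∈ S},
      2 * (za S ↑s ↑t * (x s / zd S ↑s) * (x t / zd S ↑t))
      = 2 * ∑ s : {x // x ∈ S}, ∑ t : {x // x ∈ S},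
        za S ↑s ↑t * (x s / zd S ↑s) * (x t / zd S ↑t) := by
    rw [Finset.mul_sum]
    exact Finset.sum_congr rfl fun s _ => (Finset.mul_sum _ _ _).symm
  simp only [zT_apply, sub_mul, Finset.sum_sub_distrib, hexp, Finset.sum_add_distrib,
    Finset.sum_sub_distrib, h1, h2, hC, h2']
  ring

lemma reach_eq {V : Type*} {Gr : SimpleGraph V} {Y : V → ℝ}
    (h : ∀ a b, Gr.Adj a b → Y a = Y b) {a b : V} (r : Gr.Reachable a b) : Y a = Y b := by
  obtain ⟨w⟩ := r
  induction w with
  | nil => rfl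
  | cons h' _ ih => exact (h _ _ h').trans ih

lemma zT_ker (hdeg : ∀ s ∈ S, 0 < deg S s) (hsym : ∀ s ∈ S, s⁻¹ ∈ S)
    (hconn : ∀ s ∈ S, ∀ s' ∈ S, (lGraph S).Reachable s s') (hne : S.Nonempty)
    (x : EuclideanSpace ℝ {x // x ∈ S}) (hx : zT S x = 0) :
    ∃ c : ℝ, ∀ s : {x // x ∈ S}, x s = c * zd S ↑s := by
  have hzero : ∑ s : {x // x ∈ S}, ∑ t : {x // x ∈ S},
      za S ↑s ↑t * (x s / zd S ↑s - x t / zd S ↑t)^2 = 0 := by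
    have h0 : ∑ s : {x // x ∈ S}, zT S x s * x s = 0 := by
      refine Finset.sum_eq_zero fun s _ => ?_
      have : zT S x s = 0 := by rw [hx]; rfl
      rw [this, zero_mul]
    have := zT_quad hdeg hsym x
    rw [h0] at this
    linarith [this]
  have hterm : ∀ s t : {x // x ∈ S},
      za S ↑s ↑t * (x s / zd S ↑s - x t / zd S ↑t)^2 = 0 := by
    have houter := (Finset.sum_eq_zero_iff_of_nonneg (fun s _ =>
      Finset.sum_nonneg fun t _ => mul_nonneg (za_nonneg _ _) (sq_nonneg _))).mp hzero
    intro s t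
    have hinner := (Finset.sum_eq_zero_iff_of_nonneg (fun t _ =>
      mul_nonneg (za_nonneg _ _) (sq_nonneg _))).mp (houter s (Finset.mem_univ s))
    exact hinner t (Finset.mem_univ t)
  classical
  set Y : G → ℝ := fun g => if h : g ∈ S then x ⟨g, h⟩ / zd S g else 0 with hY
  have hstep : ∀ a b, (lGraph S).Adj a b → Y a = Y b := by
    intro a b hab
    obtain ⟨ha, hb, hab1, -, -⟩ := hab
    have hza : za S a b = 1 := by unfold za; rw [if_pos hab1]
    have := hterm ⟨a, ha⟩ ⟨b, hb⟩
    rw [hza, one_mul, pow_eq_zero_iff (by norm_num), sub_eq_zero] at this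
    simp only [hY, dif_pos ha, dif_pos hb]
    exact this
  obtain ⟨s₀, hs₀⟩ := hne
  refine ⟨Y s₀, fun s => ?_⟩
  have hys : Y ↑s = Y s₀ := reach_eq hstep (hconn ↑s s.2 s₀ hs₀)
  have hd := (zd_pos hdeg s.2 : (0:ℝ) < zd S ↑s).ne'
  have : x s / zd S ↑s = Y s₀ := by
    rw [← hys]; simp only [hY, dif_pos s.2]
  field_simp at this
  linarith [this]

lemma zT_eig (hdeg : ∀ s ∈ S, 0 < deg S s) {μ : ℝ}
    {x : EuclideanSpace ℝ {x // x ∈ S}} (hx0 : x ≠ 0) (hx : zT S x = μ • x) :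
    IsLapEig S μ := by
  classical
  refine ⟨fun g => if h : g ∈ S then x ⟨g, h⟩ / zd S g else 0, ?_, ?_⟩
  · have : ∃ s : {x // x ∈ S}, x s ≠ 0 := by
      by_contra hc
      push_neg at hc
      apply hx0
      ext s
      exact hc s
    obtain ⟨s, hs⟩ := this
    refine ⟨↑s, s.2, ?_⟩
    simp only [dif_pos s.2, Subtype.coe_eta]
    exact div_ne_zero hs (zd_pos hdeg s.2).ne'
  · intro s hs
    have hcomp : zT S x ⟨s, hs⟩ = μ * x ⟨s, hs⟩ := by rw [hx]; rfl
    rw [zT_apply] at hcomp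
    have hd := (zd_pos hdeg hs : (0:ℝ) < zd S s).ne'
    simp only [dif_pos hs]
    have hfilt : ∑ s' ∈ S.filter (fun t => s⁻¹ * t ∈ S),
        (if h : s' ∈ S then x ⟨s', h⟩ / zd S s' else 0)
        = ∑ t : {x // x ∈ S}, za S s ↑t * (x t / zd S ↑t) := by
      rw [Finset.univ_eq_attach]
      rw [Finset.sum_filter]
      rw [← Finset.sum_attach S (fun s' => if s⁻¹ * s' ∈ S then
        (if h : s' ∈ S then x ⟨s', h⟩ / zd S s' else 0) else 0)]
      refine Finset.sum_congr rfl fun t _ => ?_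
      rw [dif_pos t.2]
      unfold za
      split <;> simp
    have hcomp' : x ⟨s, hs⟩ - ∑ t : {x // x ∈ S},
        za S s ↑t / (zd S s * zd S ↑t) * x t = μ * x ⟨s, hs⟩ := hcomp
    have hsum2 : ∑ t : {x // x ∈ S}, za S s ↑t / (zd S s * zd S ↑t) * x t
        = (zd S s)⁻¹ * ∑ t : {x // x ∈ S}, za S s ↑t * (x t / zd S ↑t) := by
      rw [Finset.mul_sum]
      refine Finset.sum_congr rfl fun t _ => ?_
      simp only [div_eq_mul_inv, mul_inv]
      ring
    rw [hsum2] at hcomp'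
    rw [hfilt, ← zd_sq (S := S) s]
    set A := ∑ t : {x // x ∈ S}, za S s ↑t * (x t / zd S ↑t) with hA
    set X := x ⟨s, hs⟩ with hX
    field_simp
    field_simp at hcomp'
    nlinarith [hcomp']

end New

section New3
open Finset
variable {G : Type*} [Group G] [DecidableEq G] {S : Finset G}

noncomputable def zu (S : Finset G) : EuclideanSpace ℝ {x // x ∈ S} :=
  (WithLp.equiv 2 _).symm fun s : {x // x ∈ S} => zd S ↑s

lemma zu_apply (s : {x // x ∈ S}) : zu S s = zd S ↑s := rfl

noncomputable def zB (S : Finset G) (hsym : ∀ s ∈ S, s⁻¹ ∈ S) :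
    OrthonormalBasis (Fin S.card) ℝ (EuclideanSpace ℝ {x // x ∈ S}) :=
  (zT_symm hsym).eigenvectorBasis (by simp [finrank_euclideanSpace, Fintype.card_coe])

noncomputable def zmu (S : Finset G) (hsym : ∀ s ∈ S, s⁻¹ ∈ S) : Fin S.card → ℝ :=
  (zT_symm hsym).eigenvalues (by simp [finrank_euclideanSpace, Fintype.card_coe])

variable (hsym : ∀ s ∈ S, s⁻¹ ∈ S)

lemma zB_eigen (i : Fin S.card) :
    zT S (zB S hsym i) = zmu S hsym i • zB S hsym i := by
  unfold zB zmu
  exact_mod_cast (zT_symm hsym).apply_eigenvectorBasis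
    (by simp [finrank_euclideanSpace, Fintype.card_coe]) i

lemma zB_ne (i : Fin S.card) : zB S hsym i ≠ 0 :=
  ((zT_symm hsym).hasEigenvector_eigenvectorBasis _ i).2

lemma sum_bb (s t : {x // x ∈ S}) :
    ∑ i, zB S hsym i s * zB S hsym i t = if s = t then (1:ℝ) else 0 := by
  have h := (zB S hsym).sum_inner_mul_inner
    (EuclideanSpace.single s (1:ℝ)) (EuclideanSpace.single t (1:ℝ))
  simp only [EuclideanSpace.inner_single_left, EuclideanSpace.inner_single_right,
    EuclideanSpace.single_apply, map_one, one_mul, mul_one, starRingEnd_apply,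
    star_trivial] at h
  rw [h]
  simp [eq_comm]

lemma sum_mubb (s t : {x // x ∈ S}) :
    ∑ i, zmu S hsym i * (zB S hsym i s * zB S hsym i t)
      = (if s = t then (1:ℝ) else 0) - za S ↑s ↑t / (zd S ↑s * zd S ↑t) := by
  have h := (zB S hsym).sum_inner_mul_inner
    (zT S (EuclideanSpace.single s (1:ℝ))) (EuclideanSpace.single t (1:ℝ))
  have hterm : ∀ i, (inner ℝ (zT S (EuclideanSpace.single s (1:ℝ))) (zB S hsym i) : ℝ)
      = zmu S hsym i * zB S hsym i s := by
    intro i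
    rw [zT_symm hsym _ _, zB_eigen hsym i, real_inner_smul_right,
      EuclideanSpace.inner_single_left]
    simp
  simp only [hterm, EuclideanSpace.inner_single_right, starRingEnd_apply, star_trivial,
    one_mul, mul_assoc] at h
  rw [h, zT_apply]
  simp only [EuclideanSpace.single_apply]
  have hsum : ∑ x : {x // x ∈ S}, za S ↑t ↑x / (zd S ↑t * zd S ↑x) * (if x = s then (1:ℝ) else 0)
      = za S ↑t ↑s / (zd S ↑t * zd S ↑s) := by
    rw [Finset.sum_congr rfl (fun u _ => by rw [mul_ite, mul_one, mul_zero]),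
      Finset.sum_ite_eq' Finset.univ s (fun u => za S ↑t ↑u / (zd S ↑t * zd S ↑u))]
    simp
  rw [hsum, za_symm hsym ↑t ↑s, mul_comm (zd S ↑t) (zd S ↑s)]
  congr 1
  simp [eq_comm]

lemma zT_zu (hdeg : ∀ s ∈ S, 0 < deg S s) : zT S (zu S) = 0 := by
  ext s
  rw [zT_apply]
  have hpt : ∀ t : {x // x ∈ S}, za S ↑s ↑t / (zd S ↑s * zd S ↑t) * zu S t
      = za S ↑s ↑t / zd S ↑s := by
    intro t
    have ht := (zd_pos hdeg t.2).ne'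
    rw [zu_apply, div_mul_eq_mul_div, mul_comm (za S (↑s) ↑t) (zd S ↑t),
      mul_comm (zd S ↑s) (zd S ↑t), mul_div_mul_left _ _ ht]
  have hds := (zd_pos hdeg s.2).ne'
  rw [Finset.sum_congr rfl fun t _ => hpt t, ← Finset.sum_div, sum_za s.2, zu_apply,
    ← zd_sq (S := S) ↑s, mul_div_assoc, div_self hds, mul_one, sub_self]
  rfl

lemma inner_zu_zB (hdeg : ∀ s ∈ S, 0 < deg S s) (i : Fin S.card) (h : zmu S hsym i ≠ 0) :
    (inner ℝ (zu S) (zB S hsym i) : ℝ) = 0 := by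
  have key : zmu S hsym i * (inner ℝ (zu S) (zB S hsym i) : ℝ) = 0 := by
    rw [← real_inner_smul_right, ← zB_eigen hsym i, ← zT_symm hsym _ _, zT_zu hdeg,
      inner_zero_left]
  exact (mul_eq_zero.mp key).resolve_left h

lemma parseval_zu :
    ∑ i, (inner ℝ (zu S) (zB S hsym i) : ℝ)^2 = ∑ s : {x // x ∈ S}, (deg S ↑s : ℝ) := by
  have h := (zB S hsym).sum_inner_mul_inner (zu S) (zu S)
  have h2 : ∀ i, (inner ℝ (zu S) (zB S hsym i) : ℝ) * (inner ℝ (zB S hsym i) (zu S) : ℝ)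
      = (inner ℝ (zu S) (zB S hsym i) : ℝ)^2 := by
    intro i; rw [real_inner_comm (zB S hsym i) (zu S)]; ring
  simp only [h2] at h
  rw [h]
  rw [PiLp.inner_apply]
  refine Finset.sum_congr rfl fun s _ => ?_
  simp only [RCLike.inner_apply, star_trivial, zu_apply]
  exact zd_sq _

end New3

section New4
open Finset
variable {G : Type*} [Group G] [DecidableEq G] {S : Finset G}
variable {H : Type*} [NormedAddCommGroup H] [InnerProductSpace ℂ H]

noncomputable def zphi (S : Finset G) (f : G → H) (s : {x // x ∈ S}) : H :=
  ((zd S ↑s : ℝ) : ℂ) • f ↑s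

noncomputable def zv (S : Finset G) (f : G → H) (x : EuclideanSpace ℝ {x // x ∈ S}) : H :=
  ∑ s : {x // x ∈ S}, ((x s : ℝ) : ℂ) • zphi S f s

lemma re_real_mul (r : ℝ) (z : ℂ) : ((r : ℂ) * z).re = r * z.re := by
  simp [Complex.mul_re]

lemma zv_inner_re (f : G → H) (x y : EuclideanSpace ℝ {x // x ∈ S}) :
    (inner ℂ (zv S f x) (zv S f y) : ℂ).re
      = ∑ s : {x // x ∈ S}, ∑ t : {x // x ∈ S},
          x s * y t * (inner ℂ (zphi S f s) (zphi S f t) : ℂ).re := by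
  unfold zv
  rw [sum_inner, Complex.re_sum]
  refine Finset.sum_congr rfl fun s _ => ?_
  rw [inner_sum, Complex.re_sum]
  refine Finset.sum_congr rfl fun t _ => ?_
  rw [inner_smul_left, inner_smul_right, Complex.conj_ofReal, re_real_mul, re_real_mul]
  ring

lemma norm_zv_sq (f : G → H) (x : EuclideanSpace ℝ {x // x ∈ S}) :
    ‖zv S f x‖^2 = ∑ s : {x // x ∈ S}, ∑ t : {x // x ∈ S},
        x s * x t * (inner ℂ (zphi S f s) (zphi S f t) : ℂ).re := by
  rw [← zv_inner_re]
  have := inner_self_eq_norm_sq (𝕜 := ℂ) (zv S f x)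
  rw [RCLike.re_to_complex] at this
  rw [this]

lemma edge_card : (edgeSet S).card = ∑ s ∈ S, deg S s := by
  unfold edgeSet deg
  rw [Finset.card_filter, Finset.sum_product]
  exact Finset.sum_congr rfl fun s _ => by rw [Finset.sum_boole]; rfl

end New4

/-- Żuk's spectral-gap estimate: if `λ₁ = λ₁(L(S))` is the smallest nonzero eigenvalue of
the Laplacian of the connected graph `L(S)`, then for every `f ∈ C¹`,
`⟨Δf, f⟩_{L(S)} ≥ λ₁ ⟨f,f⟩_{C¹} − (λ₁/4) ⟨d₁*f, d₁*f⟩_{C⁰}`. -/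
theorem stmt11 {G : Type*} [Group G] [DecidableEq G]
    {H : Type*} [NormedAddCommGroup H] [InnerProductSpace ℂ H] [CompleteSpace H]
    (S : Finset G) (hsym : ∀ s ∈ S, s⁻¹ ∈ S) (hone : (1 : G) ∉ S)
    (hconn : ∀ s ∈ S, ∀ s' ∈ S, (lGraph S).Reachable s s')
    (lam1 : ℝ) (hlam1 : IsLapEig S lam1) (hlam1ne : lam1 ≠ 0)
    (hlam1min : ∀ μ : ℝ, IsLapEig S μ → μ ≠ 0 → lam1 ≤ μ)
    (π : G → H →L[ℂ] H) (hunit : ∀ s ∈ S, π s ∈ unitary (H →L[ℂ] H))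
    (hstar : ∀ s ∈ S, π s⁻¹ = star (π s))
    (f : G → H) (hf : ∀ s ∈ S, f s⁻¹ = -(π s⁻¹ (f s))) :
    (∑ s ∈ S, (deg S s : ℝ) *
        (inner ℂ (f s - ((deg S s : ℂ))⁻¹ • ∑ s' ∈ S.filter (fun t => s⁻¹ * t ∈ S), f s')
          (f s) : ℂ).re)
      ≥ lam1 * (∑ s ∈ S, (deg S s : ℝ) * ‖f s‖ ^ 2)
        - (lam1 / 4) * (((edgeSet S).card : ℝ) * ‖d1star S f‖ ^ 2) := by
  classical
  -- Degenerate case: S empty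
  rcases S.eq_empty_or_nonempty with hS | hne
  · subst hS
    simp [edgeSet]
  -- Degenerate case: some vertex has degree zero
  by_cases hdeg : ∀ s ∈ S, 0 < deg S s
  swap
  · push_neg at hdeg
    obtain ⟨s₀, hs₀, hd0⟩ := hdeg
    have hd0 : deg S s₀ = 0 := Nat.le_zero.mp hd0
    have hiso : ∀ b, ¬ (lGraph S).Adj s₀ b := by
      intro b hb
      have hbmem : b ∈ S.filter (fun s' => s₀⁻¹ * s' ∈ S) :=
        Finset.mem_filter.mpr ⟨hb.2.1, hb.2.2.1⟩
      have := Finset.card_eq_zero.mp hd0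
      rw [this] at hbmem
      exact absurd hbmem (Finset.notMem_empty b)
    have hSsub : ∀ t ∈ S, t = s₀ := by
      intro t ht
      obtain ⟨w⟩ := hconn s₀ hs₀ t ht
      cases w with
      | nil => rfl
      | cons h _ => exact absurd h (hiso _)
    have hdall : ∀ t ∈ S, deg S t = 0 := fun t ht => by rw [hSsub t ht]; exact hd0
    have hedge : edgeSet S = ∅ := by
      rw [Finset.eq_empty_iff_forall_notMem]
      intro p hp
      rw [edgeSet, Finset.mem_filter, Finset.mem_product] at hp
      obtain ⟨⟨h1, h2⟩, h3⟩ := hp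
      rw [hSsub _ h1, hSsub _ h2, inv_mul_cancel] at h3
      exact hone h3
    have hL0 : ∑ s ∈ S, (deg S s : ℝ) *
        (inner ℂ (f s - ((deg S s : ℂ))⁻¹ • ∑ s' ∈ S.filter (fun t => s⁻¹ * t ∈ S), f s')
          (f s) : ℂ).re = 0 :=
      Finset.sum_eq_zero fun s hs => by rw [hdall s hs]; simp
    have hR0 : ∑ s ∈ S, (deg S s : ℝ) * ‖f s‖ ^ 2 = 0 :=
      Finset.sum_eq_zero fun s hs => by rw [hdall s hs]; simp
    rw [hL0, hR0, hedge]
    simp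
  -- Main case
  set E := EuclideanSpace ℝ {x // x ∈ S}
  set b := zB S hsym with hb
  set μ := zmu S hsym with hμ
  set w := zv S f (zu S) with hwdef
  set τ := ∑ s : {x // x ∈ S}, (deg S ↑s : ℝ) with hτdef
  have hτcast : ((edgeSet S).card : ℝ) = τ := by
    rw [edge_card, hτdef, Finset.sum_coe_sort S (fun s => (deg S s : ℝ))]
    push_cast
    rfl
  have hτpos : 0 < τ := by
    rw [hτdef]
    refine Finset.sum_pos (fun s _ => by exact_mod_cast hdeg ↑s s.2) ?_
    obtain ⟨s₀, hs₀⟩ := hne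
    exact ⟨⟨s₀, hs₀⟩, Finset.mem_univ _⟩
  have hτne : τ ≠ 0 := hτpos.ne'
  -- diag and offdiag values of the pairing
  have hgdiag : ∀ s : {x // x ∈ S},
      (inner ℂ (zphi S f s) (zphi S f s) : ℂ).re = (deg S ↑s : ℝ) * ‖f ↑s‖^2 := by
    intro s
    unfold zphi
    rw [inner_smul_left, inner_smul_right, Complex.conj_ofReal, re_real_mul, re_real_mul]
    have := inner_self_eq_norm_sq (𝕜 := ℂ) (f ↑s)
    rw [RCLike.re_to_complex] at this
    rw [this, ← mul_assoc, zd_sq]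
  have hgoff : ∀ s t : {x // x ∈ S},
      za S ↑s ↑t / (zd S ↑s * zd S ↑t) * (inner ℂ (zphi S f s) (zphi S f t) : ℂ).re
        = za S ↑s ↑t * (inner ℂ (f ↑s) (f ↑t) : ℂ).re := by
    intro s t
    unfold zphi
    rw [inner_smul_left, inner_smul_right, Complex.conj_ofReal, re_real_mul, re_real_mul]
    have hs := (zd_pos hdeg s.2).ne'
    have ht := (zd_pos hdeg t.2).ne'
    field_simp
  -- the eigen-sum identity
  have h_eig_sum : ∑ i, μ i * ‖zv S f (b i)‖^2
      = ∑ s : {x // x ∈ S}, (deg S ↑s : ℝ) * ‖f ↑s‖^2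
        - ∑ s : {x // x ∈ S}, ∑ t : {x // x ∈ S},
            za S ↑s ↑t * (inner ℂ (f ↑s) (f ↑t) : ℂ).re := by
    have e1 : ∀ i, μ i * ‖zv S f (b i)‖^2
        = ∑ s : {x // x ∈ S}, ∑ t : {x // x ∈ S},
            (μ i * (b i s * b i t)) * (inner ℂ (zphi S f s) (zphi S f t) : ℂ).re := by
      intro i
      rw [norm_zv_sq, Finset.mul_sum]
      refine Finset.sum_congr rfl fun s _ => ?_
      rw [Finset.mul_sum]
      exact Finset.sum_congr rfl fun t _ => by ring
    rw [Finset.sum_congr rfl fun i _ => e1 i]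
    rw [Finset.sum_comm]
    have e2 : ∀ s : {x // x ∈ S}, ∑ i, ∑ t : {x // x ∈ S},
        (μ i * (b i s * b i t)) * (inner ℂ (zphi S f s) (zphi S f t) : ℂ).re
        = ∑ t : {x // x ∈ S},
            ((if s = t then (1:ℝ) else 0) - za S ↑s ↑t / (zd S ↑s * zd S ↑t))
              * (inner ℂ (zphi S f s) (zphi S f t) : ℂ).re := by
      intro s
      rw [Finset.sum_comm]
      refine Finset.sum_congr rfl fun t _ => ?_
      rw [← Finset.sum_mul, sum_mubb hsym]
    rw [Finset.sum_congr rfl fun s _ => e2 s]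
    have e3 : ∀ s : {x // x ∈ S}, ∑ t : {x // x ∈ S},
        ((if s = t then (1:ℝ) else 0) - za S ↑s ↑t / (zd S ↑s * zd S ↑t))
          * (inner ℂ (zphi S f s) (zphi S f t) : ℂ).re
        = (deg S ↑s : ℝ) * ‖f ↑s‖^2
          - ∑ t : {x // x ∈ S}, za S ↑s ↑t * (inner ℂ (f ↑s) (f ↑t) : ℂ).re := by
      intro s
      simp only [sub_mul, ite_mul, one_mul, zero_mul, Finset.sum_sub_distrib]
      rw [Finset.sum_ite_eq Finset.univ s
        (fun t => (inner ℂ (zphi S f s) (zphi S f t) : ℂ).re)]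
      simp only [Finset.mem_univ, if_true]
      rw [hgdiag s]
      congr 1
      exact Finset.sum_congr rfl fun t _ => hgoff s t
    rw [Finset.sum_congr rfl fun s _ => e3 s, Finset.sum_sub_distrib]
  -- the Parseval identity
  have h_par_sum : ∑ i, ‖zv S f (b i)‖^2
      = ∑ s : {x // x ∈ S}, (deg S ↑s : ℝ) * ‖f ↑s‖^2 := by
    have e1 : ∀ i, ‖zv S f (b i)‖^2
        = ∑ s : {x // x ∈ S}, ∑ t : {x // x ∈ S},
            (b i s * b i t) * (inner ℂ (zphi S f s) (zphi S f t) : ℂ).re := by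
      intro i; rw [norm_zv_sq]
    rw [Finset.sum_congr rfl fun i _ => e1 i, Finset.sum_comm]
    refine Finset.sum_congr rfl fun s _ => ?_
    rw [Finset.sum_comm]
    have : ∀ t : {x // x ∈ S}, ∑ i, (b i s * b i t)
        * (inner ℂ (zphi S f s) (zphi S f t) : ℂ).re
        = (if s = t then (1:ℝ) else 0) * (inner ℂ (zphi S f s) (zphi S f t) : ℂ).re := by
      intro t
      rw [← Finset.sum_mul, sum_bb hsym]
    rw [Finset.sum_congr rfl fun t _ => this t]
    simp only [ite_mul, one_mul, zero_mul]
    rw [Finset.sum_ite_eq Finset.univ s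
      (fun t => (inner ℂ (zphi S f s) (zphi S f t) : ℂ).re)]
    simp only [Finset.mem_univ, if_true]
    exact hgdiag s
  -- LHS conversion
  have hLHS : ∑ s ∈ S, (deg S s : ℝ) *
      (inner ℂ (f s - ((deg S s : ℂ))⁻¹ • ∑ s' ∈ S.filter (fun t => s⁻¹ * t ∈ S), f s')
        (f s) : ℂ).re
      = ∑ i, μ i * ‖zv S f (b i)‖^2 := by
    rw [h_eig_sum, ← Finset.sum_sub_distrib]
    rw [← Finset.sum_coe_sort S (fun s => (deg S s : ℝ) *
      (inner ℂ (f s - ((deg S s : ℂ))⁻¹ • ∑ s' ∈ S.filter (fun t => s⁻¹ * t ∈ S), f s')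
        (f s) : ℂ).re)]
    refine Finset.sum_congr rfl fun s _ => ?_
    have hdS : (deg S (↑s : G) : ℝ) ≠ 0 := by exact_mod_cast (hdeg ↑s s.2).ne'
    rw [inner_sub_left, inner_smul_left]
    have hconj : (starRingEnd ℂ) (((deg S (↑s : G) : ℕ) : ℂ))⁻¹ = ((deg S (↑s:G) : ℝ) : ℂ)⁻¹ := by
      rw [map_inv₀, Complex.conj_natCast, Complex.ofReal_natCast]
    rw [hconj, Complex.sub_re, ← Complex.ofReal_inv, re_real_mul]
    have hself := inner_self_eq_norm_sq (𝕜 := ℂ) (f (↑s : G))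
    rw [RCLike.re_to_complex] at hself
    rw [hself]
    have hfsum : (inner ℂ (∑ s' ∈ S.filter (fun t => (↑s:G)⁻¹ * t ∈ S), f s') (f ↑s) : ℂ).re
        = ∑ t : {x // x ∈ S}, za S ↑s ↑t * (inner ℂ (f ↑s) (f ↑t) : ℂ).re := by
      rw [sum_inner, Complex.re_sum, Finset.sum_filter]
      rw [← Finset.sum_attach S (fun s' => if (↑s:G)⁻¹ * s' ∈ S
        then (inner ℂ (f s') (f ↑s) : ℂ).re else 0), ← Finset.univ_eq_attach]
      refine Finset.sum_congr rfl fun t _ => ?_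
      have hre : (inner ℂ (f (↑t:G)) (f (↑s:G)) : ℂ).re = (inner ℂ (f (↑s:G)) (f (↑t:G)) : ℂ).re := by
        rw [← inner_conj_symm, Complex.conj_re]
      unfold za
      split <;> simp [hre]
    rw [hfsum]
    field_simp
  -- kernel terms
  have hker_i : ∀ i, μ i = 0 → ‖zv S f (b i)‖^2
      = (inner ℝ (zu S) (b i) : ℝ)^2 * ‖w‖^2 / τ^2 := by
    intro i hi
    have h0 : zT S (b i) = 0 := by rw [zB_eigen hsym i, ← hμ, hi, zero_smul]
    obtain ⟨c, hc⟩ := zT_ker hdeg hsym hconn hne (b i) h0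
    have hinner : (inner ℝ (zu S) (b i) : ℝ) = c * τ := by
      rw [PiLp.inner_apply]
      rw [hτdef, Finset.mul_sum]
      refine Finset.sum_congr rfl fun s _ => ?_
      simp only [RCLike.inner_apply, starRingEnd_apply, star_trivial, zu_apply, hc s]
      rw [← zd_sq]
      ring
    have hv : zv S f (b i) = (c : ℂ) • w := by
      rw [hwdef]
      unfold zv
      rw [Finset.smul_sum]
      refine Finset.sum_congr rfl fun s _ => ?_
      rw [hc s, zu_apply, Complex.ofReal_mul, mul_smul]
    rw [hv, hinner, norm_smul]
    simp only [Complex.norm_real, Real.norm_eq_abs]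
    rw [mul_pow, sq_abs, mul_pow]
    field_simp
  -- vanishing coefficients off the kernel
  have hcoef : ∀ i, μ i ≠ 0 → (inner ℝ (zu S) (b i) : ℝ) = 0 :=
    fun i hi => inner_zu_zB hsym hdeg i hi
  -- sum over kernel indices
  have hNZ : ∑ i ∈ Finset.univ.filter (fun i => μ i = 0), ‖zv S f (b i)‖^2
      = ‖w‖^2 / τ := by
    rw [Finset.sum_congr rfl fun i hi => hker_i i (Finset.mem_filter.mp hi).2]
    rw [← Finset.sum_div, ← Finset.sum_mul]
    have hfull : ∑ i ∈ Finset.univ.filter (fun i => μ i = 0), (inner ℝ (zu S) (b i) : ℝ)^2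
        = ∑ i, (inner ℝ (zu S) (b i) : ℝ)^2 := by
      rw [← Finset.sum_filter_add_sum_filter_not Finset.univ (fun i => μ i = 0)
        (fun i => (inner ℝ (zu S) (b i) : ℝ)^2)]
      have : ∑ i ∈ Finset.univ.filter (fun i => ¬ μ i = 0), (inner ℝ (zu S) (b i) : ℝ)^2 = 0 :=
        Finset.sum_eq_zero fun i hi => by
          rw [hcoef i (Finset.mem_filter.mp hi).2]; ring
      rw [this, add_zero]
    rw [hfull, parseval_zu hsym, ← hτdef]
    field_simp
  -- RHS conversions
  have hR1 : ∑ s ∈ S, (deg S s : ℝ) * ‖f s‖ ^ 2 = ∑ i, ‖zv S f (b i)‖^2 := by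
    rw [h_par_sum, ← Finset.sum_coe_sort S (fun s => (deg S s : ℝ) * ‖f s‖ ^ 2)]
  have hwsum : ∑ s ∈ S, (deg S s : ℂ) • f s = w := by
    rw [hwdef]
    unfold zv zphi
    rw [← Finset.sum_coe_sort S (fun s => (deg S s : ℂ) • f s)]
    refine Finset.sum_congr rfl fun s _ => ?_
    rw [zu_apply, smul_smul, ← Complex.ofReal_mul, zd_sq, Complex.ofReal_natCast]
  have hd1 : ‖d1star S f‖^2 = (2/τ)^2 * ‖w‖^2 := by
    rw [d1star, hwsum, norm_smul, mul_pow, edge_card]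
    congr 2
    rw [norm_neg, norm_div, RCLike.norm_ofNat, Complex.norm_natCast]
    congr 1
    rw [hτdef, Finset.sum_coe_sort S (fun s => (deg S s : ℝ))]
    push_cast
    rfl
  -- final assembly
  rw [hLHS, hR1, hτcast, hd1]
  have harith : (lam1 / 4) * (τ * ((2/τ)^2 * ‖w‖^2)) = lam1 * (‖w‖^2 / τ) := by
    field_simp
    ring
  rw [harith, ← hNZ]
  rw [← Finset.sum_filter_add_sum_filter_not Finset.univ (fun i => μ i = 0)
    (fun i => μ i * ‖zv S f (b i)‖^2)]
  rw [← Finset.sum_filter_add_sum_filter_not Finset.univ (fun i => μ i = 0)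
    (fun i => ‖zv S f (b i)‖^2)]
  have hZzero : ∑ i ∈ Finset.univ.filter (fun i => μ i = 0), μ i * ‖zv S f (b i)‖^2 = 0 :=
    Finset.sum_eq_zero fun i hi => by rw [(Finset.mem_filter.mp hi).2, zero_mul]
  have hmain : ∑ i ∈ Finset.univ.filter (fun i => ¬ μ i = 0), lam1 * ‖zv S f (b i)‖^2
      ≤ ∑ i ∈ Finset.univ.filter (fun i => ¬ μ i = 0), μ i * ‖zv S f (b i)‖^2 := by
    refine Finset.sum_le_sum fun i hi => ?_
    have hμne := (Finset.mem_filter.mp hi).2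
    have hlap : IsLapEig S (μ i) := zT_eig hdeg (zB_ne hsym i) (zB_eigen hsym i)
    exact mul_le_mul_of_nonneg_right (hlam1min (μ i) hlap hμne) (sq_nonneg _)
  have hms : lam1 * ∑ i ∈ Finset.univ.filter (fun i => ¬ μ i = 0), ‖zv S f (b i)‖^2
      = ∑ i ∈ Finset.univ.filter (fun i => ¬ μ i = 0), lam1 * ‖zv S f (b i)‖^2 :=
    Finset.mul_sum _ _ _
  linarith [hmain, hZzero, hms]
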